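/- Let R be an m×p real matrix, s, β̂ ∈ ℝ^p, λ ≥ 0, and let D be a p×p diagonal matrix with positive diagonal entries. Then strong duality holds for the h-subproblem of the alternating linearization method: the minimum over β ∈ ℝ^p of ⟨s, β⟩ + λ‖Rβ‖₁ + ½‖β − β̂‖²_D equals the maximum over μ ∈ ℝ^m with ‖μ‖_∞ ≤ λ of −½ μᵀ R D⁻¹ Rᵀ μ + ⟨μ, R(β̂ − D⁻¹s)⟩, plus the constant ⟨s, β̂⟩ − ½⟨s, D⁻¹s⟩; both the minimum and the maximum are attained. -/

import Mathlib

private lemma aux_nonpos (a b : ℝ) (hb : 0 ≤ b)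
    (h : ∀ t : ℝ, 0 < t → t ≤ 1 → t * a ≤ t^2 * b) : a ≤ 0 := by
  by_contra hc
  push_neg at hc
  rcases eq_or_lt_of_le hb with hb0 | hb0
  · have := h 1 one_pos le_rfl; nlinarith
  · have hq : 0 < a / (2*b) := by positivity
    set t := min 1 (a / (2*b)) with ht
    have ht0 : 0 < t := lt_min one_pos hq
    have ht1 : t ≤ 1 := min_le_left _ _
    have h1 := h t ht0 ht1
    have h2 : a ≤ t * b := by nlinarith
    have h3 : t * b ≤ a/2 := by
      have := min_le_right 1 (a / (2*b))
      calc t * b ≤ (a/(2*b)) * b := by nlinarith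
        _ = a/2 := by field_simp
    linarith

private lemma sum_mulVec_eq {m p : ℕ} (R : Matrix (Fin m) (Fin p) ℝ)
    (μ : Fin m → ℝ) (β : Fin p → ℝ) :
    ∑ i, μ i * R.mulVec β i = ∑ j, (∑ i, μ i * R i j) * β j := by
  simp only [Matrix.mulVec, dotProduct, Finset.mul_sum, Finset.sum_mul]
  rw [Finset.sum_comm]
  exact Finset.sum_congr rfl fun j _ => Finset.sum_congr rfl fun i _ => by ring

private lemma sum_quad_eq {m p : ℕ} (R : Matrix (Fin m) (Fin p) ℝ)
    (d : Fin p → ℝ) (μ : Fin m → ℝ) :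
    ∑ i, μ i * ((R * Matrix.diagonal (fun j => (d j)⁻¹) * R.transpose).mulVec μ) i
      = ∑ j, (d j)⁻¹ * (∑ i, μ i * R i j)^2 := by
  have swap3 : ∀ (f : Fin m → Fin m → Fin p → ℝ),
      ∑ x, ∑ y, ∑ j, f x y j = ∑ j, ∑ x, ∑ y, f x y j := by
    intro f
    rw [show (∑ x, ∑ y, ∑ j, f x y j) = ∑ x, ∑ j, ∑ y, f x y j from
      Finset.sum_congr rfl fun x _ => Finset.sum_comm]
    exact Finset.sum_comm
  simp only [Matrix.mulVec, dotProduct, Matrix.mul_apply, Matrix.diagonal_apply,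
    Matrix.transpose_apply, Finset.mul_sum, Finset.sum_mul, sq, mul_ite, ite_mul,
    mul_zero, zero_mul, Finset.sum_ite_eq, Finset.mem_univ, if_true]
  rw [swap3]
  refine Finset.sum_congr rfl fun j _ => ?_
  refine Finset.sum_congr rfl fun i _ => Finset.sum_congr rfl fun k _ => by
    simp [Finset.sum_ite_eq]; ring

theorem stmt10 {m p : ℕ} (R : Matrix (Fin m) (Fin p) ℝ)
    (s βhat : Fin p → ℝ) (lam : ℝ) (hlam : 0 ≤ lam)
    (d : Fin p → ℝ) (hd : ∀ j, 0 < d j)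
    (P : (Fin p → ℝ) → ℝ)
    (hP : ∀ β : Fin p → ℝ, P β = (∑ j, s j * β j) + lam * (∑ i, |R.mulVec β i|)
        + (1/2) * ∑ j, d j * (β j - βhat j)^2)
    (Dl : (Fin m → ℝ) → ℝ)
    (hDl : ∀ μ : Fin m → ℝ, Dl μ = -(1/2) * (∑ i, μ i
          * ((R * Matrix.diagonal (fun j => (d j)⁻¹) * R.transpose).mulVec μ) i)
        + ∑ i, μ i * (R.mulVec (fun j => βhat j - s j / d j)) i) :
    ∃ βstar : Fin p → ℝ, ∃ μstar : Fin m → ℝ,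
      (∀ β, P βstar ≤ P β) ∧
      (∀ i, |μstar i| ≤ lam) ∧
      (∀ μ : Fin m → ℝ, (∀ i, |μ i| ≤ lam) → Dl μ ≤ Dl μstar) ∧
      P βstar = Dl μstar + (∑ j, s j * βhat j) - (1/2) * ∑ j, s j * (s j / d j) := by
  have hdne : ∀ j, d j ≠ 0 := fun j => (hd j).ne'
  -- the compact box
  set K := Set.Icc (fun _ => -lam : Fin m → ℝ) (fun _ => lam) with hK
  have hKmem : ∀ μ : Fin m → ℝ, μ ∈ K ↔ ∀ i, |μ i| ≤ lam := by
    intro μ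
    simp only [hK, Set.mem_Icc, Pi.le_def, abs_le]
    exact ⟨fun ⟨h1, h2⟩ i => ⟨h1 i, h2 i⟩, fun h => ⟨fun i => (h i).1, fun i => (h i).2⟩⟩
  -- continuity of the dual objective
  have hDlc : Continuous Dl := by
    have : Dl = fun μ => -(1/2) * (∑ i, μ i
          * ((R * Matrix.diagonal (fun j => (d j)⁻¹) * R.transpose).mulVec μ) i)
        + ∑ i, μ i * (R.mulVec (fun j => βhat j - s j / d j)) i := funext hDl
    rw [this]
    simp only [Matrix.mulVec, dotProduct]
    fun_prop
  -- existence of the dual maximizer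
  have hKcpt : IsCompact K := isCompact_Icc
  have hKne : K.Nonempty := ⟨0, by
    rw [hKmem]; intro i; simpa using hlam⟩
  obtain ⟨μstar, hμmem, hmax'⟩ := hKcpt.exists_isMaxOn hKne hDlc.continuousOn
  have hμK : ∀ i, |μstar i| ≤ lam := (hKmem μstar).mp hμmem
  have hmax : ∀ μ : Fin m → ℝ, (∀ i, |μ i| ≤ lam) → Dl μ ≤ Dl μstar :=
    fun μ hμ => hmax' ((hKmem μ).mpr hμ)
  -- primal candidate
  set βstar : Fin p → ℝ := fun j => βhat j - (s j + ∑ i, μstar i * R i j) / d j with hβstar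
  set C : ℝ := (∑ j, s j * βhat j) - (1/2) * ∑ j, s j * (s j / d j) with hC
  -- the key Lagrangian identity
  have key : ∀ (μ : Fin m → ℝ) (β : Fin p → ℝ),
      (∑ j, s j * β j) + (∑ i, μ i * R.mulVec β i) + (1/2) * ∑ j, d j * (β j - βhat j)^2
      = Dl μ + C
        + (1/2) * ∑ j, d j * (β j - (βhat j - (s j + ∑ i, μ i * R i j) / d j))^2 := by
    intro μ β
    rw [hDl, hC, sum_quad_eq R d μ, sum_mulVec_eq R μ β,
      sum_mulVec_eq R μ (fun j => βhat j - s j / d j)]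
    simp only [Finset.mul_sum, neg_mul, ← Finset.sum_neg_distrib,
      ← Finset.sum_add_distrib, ← Finset.sum_sub_distrib]
    refine Finset.sum_congr rfl fun j _ => ?_
    have := hdne j
    field_simp
    ring
  -- weak duality helper
  have habs : ∀ β, ∑ i, μstar i * R.mulVec β i ≤ lam * ∑ i, |R.mulVec β i| := by
    intro β
    rw [Finset.mul_sum]
    refine Finset.sum_le_sum fun i _ => ?_
    calc μstar i * R.mulVec β i ≤ |μstar i * R.mulVec β i| := le_abs_self _
      _ = |μstar i| * |R.mulVec β i| := abs_mul _ _
      _ ≤ lam * |R.mulVec β i| := mul_le_mul_of_nonneg_right (hμK i) (abs_nonneg _)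
  have hPL : ∀ β, Dl μstar + C + (1/2) * ∑ j, d j * (β j - βstar j)^2 ≤ P β := by
    intro β
    rw [hP]
    have hk := key μstar β
    have := habs β
    simp only [hβstar] at *
    linarith
  have hquad0 : (1/2) * ∑ j, d j * (βstar j - (βhat j - (s j + ∑ i, μstar i * R i j) / d j))^2
      = 0 := by
    rw [hβstar]
    simp
  have hPstar : P βstar = Dl μstar + C
      + (lam * ∑ i, |R.mulVec βstar i| - ∑ i, μstar i * R.mulVec βstar i) := by
    have hk := key μstar βstar
    rw [hquad0] at hk
    rw [hP]
    linarith
  -- variational inequality from dual optimality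
  have hvar : ∀ μ : Fin m → ℝ, (∀ i, |μ i| ≤ lam) →
      ∑ i, (μ i - μstar i) * R.mulVec βstar i ≤ 0 := by
    intro μ hμ
    set a : ℝ := ∑ i, (μ i - μstar i) * R.mulVec βstar i with ha
    set b : ℝ := (1/2) * ∑ j, (∑ i, (μ i - μstar i) * R i j)^2 / d j with hb
    have hbnn : 0 ≤ b := by
      rw [hb]
      have : ∀ j ∈ Finset.univ, (0:ℝ) ≤ (∑ i, (μ i - μstar i) * R i j)^2 / d j :=
        fun j _ => div_nonneg (sq_nonneg _) (hd j).le
      have := Finset.sum_nonneg this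
      linarith
    refine aux_nonpos a b hbnn fun t ht0 ht1 => ?_
    set μt : Fin m → ℝ := fun i => μstar i + t * (μ i - μstar i) with hμt
    have hμtK : ∀ i, |μt i| ≤ lam := by
      intro i
      have : μt i = (1 - t) * μstar i + t * μ i := by rw [hμt]; ring
      rw [this]
      calc |(1 - t) * μstar i + t * μ i| ≤ |(1 - t) * μstar i| + |t * μ i| := abs_add_le _ _
        _ = (1 - t) * |μstar i| + t * |μ i| := by
            rw [abs_mul, abs_mul, abs_of_nonneg (by linarith), abs_of_nonneg ht0.le]
        _ ≤ (1 - t) * lam + t * lam := by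
            have h1 := hμK i; have h2 := hμ i
            have := abs_nonneg (μstar i)
            nlinarith
        _ = lam := by ring
    have hD := hmax μt hμtK
    have hk1 := key μstar βstar
    have hk2 := key μt βstar
    rw [hquad0] at hk1
    -- the quadratic term for μt
    have hq2 : (1/2) * ∑ j, d j * (βstar j - (βhat j - (s j + ∑ i, μt i * R i j) / d j))^2
        = t^2 * b := by
      simp only [hb, Finset.mul_sum]
      refine Finset.sum_congr rfl fun j _ => ?_
      have h1 : ∑ i, μt i * R i j = (∑ i, μstar i * R i j) + t * ∑ i, (μ i - μstar i) * R i j := by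
        rw [hμt, Finset.mul_sum, ← Finset.sum_add_distrib]
        exact Finset.sum_congr rfl fun i _ => by ring
      rw [hβstar]
      simp only [h1]
      have := hdne j
      field_simp
      ring
    have hsum : ∑ i, μt i * R.mulVec βstar i
        = (∑ i, μstar i * R.mulVec βstar i) + t * a := by
      rw [ha, Finset.mul_sum, ← Finset.sum_add_distrib, hμt]
      exact Finset.sum_congr rfl fun i _ => by ring
    rw [hq2, hsum] at hk2
    linarith
  -- complementary slackness
  have hcs : lam * ∑ i, |R.mulVec βstar i| = ∑ i, μstar i * R.mulVec βstar i := by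
    refine le_antisymm ?_ (habs βstar)
    set σ : Fin m → ℝ := fun i => if 0 ≤ R.mulVec βstar i then lam else -lam with hσ
    have hσi : ∀ i, σ i = if 0 ≤ R.mulVec βstar i then lam else -lam := fun i => rfl
    have hσK : ∀ i, |σ i| ≤ lam := by
      intro i
      rw [hσi i]
      split <;> simp [abs_of_nonneg hlam, abs_of_nonpos (neg_nonpos.mpr hlam)]
    have h1 := hvar σ hσK
    have h2 : ∑ i, (σ i - μstar i) * R.mulVec βstar i
        = lam * (∑ i, |R.mulVec βstar i|) - ∑ i, μstar i * R.mulVec βstar i := by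
      rw [Finset.mul_sum, ← Finset.sum_sub_distrib]
      refine Finset.sum_congr rfl fun i _ => ?_
      rw [hσi i]
      split
      · next h => rw [abs_of_nonneg h]; ring
      · next h => rw [abs_of_neg (lt_of_not_ge h)]; ring
    linarith
  have hPeq : P βstar = Dl μstar + C := by rw [hPstar, hcs]; ring
  refine ⟨βstar, μstar, ?_, hμK, hmax, by rw [hPeq, hC]; ring⟩
  intro β
  have h1 := hPL β
  have h2 : 0 ≤ (1/2) * ∑ j, d j * (β j - βstar j)^2 := by
    have : ∀ j ∈ Finset.univ, (0:ℝ) ≤ d j * (β j - βstar j)^2 :=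
      fun j _ => mul_nonneg (hd j).le (sq_nonneg _)
    have := Finset.sum_nonneg this
    linarith
  rw [hPeq]
  exact le_trans (le_add_of_nonneg_right h2) h1
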